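/- arXiv:math/0602119 — 2 statements merged into one kernel-verified Lean document; each statement's English description precedes it below -/
import Mathlib

section
/- Let Θ = {t ∈ ℂ : 0 ≤ Im t ≤ 1} be the closed horizontal strip, and let w : Θ → ℂ^n be holomorphic (continuous on Θ, holomorphic in the interior) with bounded derivative ‖Dw‖ ≤ C, such that w maps each of the two boundary lines {Im t = 0} and {Im t = 1} into a translate of ℝ^n (i.e., there exist p₀, p₁ ∈ ℂ^n with w({Im t = 0}) ⊆ p₀ + ℝ^n and w({Im t = 1}) ⊆ p₁ + ℝ^n). Then w is affine linear. -/
open Complex Set Filter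

private lemma euclidean_coord_norm_le {n : ℕ} (x : EuclideanSpace ℂ (Fin n)) (i : Fin n) :
    ‖x i‖ ≤ ‖x‖ := by
  rw [EuclideanSpace.norm_eq, ← Real.sqrt_sq (norm_nonneg (x i))]
  exact Real.sqrt_le_sqrt
    (Finset.single_le_sum (f := fun j => ‖x j‖ ^ 2) (fun j _ => sq_nonneg _) (Finset.mem_univ i))

private lemma strip_scalar (f : ℂ → ℂ) (K : ℝ) (hK : 0 ≤ K) (c₀ c₁ : ℝ)
    (hcont : ContinuousOn f {t : ℂ | 0 ≤ t.im ∧ t.im ≤ 1})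
    (hdiff : ∀ t : ℂ, 0 < t.im → t.im < 1 → DifferentiableAt ℂ f t)
    (hbd : ∀ t : ℂ, 0 < t.im → t.im < 1 → ‖deriv f t‖ ≤ K)
    (h0 : ∀ t : ℂ, t.im = 0 → (f t).im = c₀)
    (h1 : ∀ t : ℂ, t.im = 1 → (f t).im = c₁)
    (t : ℂ) (ht0 : 0 ≤ t.im) (ht1 : t.im ≤ 1) :
    f t = ((c₁ - c₀ : ℝ) : ℂ) * t + (f (I / 2) - ((c₁ - c₀ : ℝ) : ℂ) * (I / 2)) := by
  set a : ℝ := c₁ - c₀ with ha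
  set h : ℂ → ℂ := fun z => f z - (a : ℂ) * z with hh
  set U : Set ℂ := Complex.im ⁻¹' Ioo 0 1 with hU
  have hUopen : IsOpen U := isOpen_Ioo.preimage Complex.continuous_im
  have hUconv : Convex ℝ U := by
    have : U = {z : ℂ | 0 < z.im} ∩ {z : ℂ | z.im < 1} := by
      ext z; simp [hU, mem_Ioo]
    rw [this]
    exact (convex_halfSpace_im_gt 0).inter (convex_halfSpace_im_lt 1)
  have hclosU : closure U = {t : ℂ | 0 ≤ t.im ∧ t.im ≤ 1} := by
    rw [hU, Complex.closure_preimage_im, closure_Ioo (by norm_num : (0:ℝ) ≠ 1)]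
    ext z; simp [mem_Icc]
  have hmemU : (I / 2) ∈ U := by
    simp only [hU, mem_preimage, mem_Ioo]
    norm_num
  have hmemUprop : ∀ z ∈ U, 0 < z.im ∧ z.im < 1 := fun z hz => hz
  have hdiffh : ∀ z ∈ U, DifferentiableAt ℂ h z := fun z hz =>
    (hdiff z hz.1 hz.2).sub (differentiableAt_id.const_mul _)
  have hderh : ∀ z ∈ U, HasDerivAt h (deriv f z - a) z := by
    intro z hz
    have h1 := (hdiff z hz.1 hz.2).hasDerivAt
    have h2 : HasDerivAt (fun w : ℂ => (a : ℂ) * w) ((a : ℂ)) z := by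
      simpa using (hasDerivAt_id z).const_mul (a : ℂ)
    exact h1.sub h2
  have hfderh : ∀ z ∈ U, fderiv ℂ h z
      = ContinuousLinearMap.smulRight (1 : ℂ →L[ℂ] ℂ) (deriv f z - a) := fun z hz =>
    (hderh z hz).hasFDerivAt.fderiv
  set K' : ℝ := K + |a| with hK'def
  have hK' : 0 ≤ K' := by positivity
  have hKtot : ∀ z ∈ U, ‖fderiv ℂ h z‖ ≤ K' := by
    intro z hz
    rw [hfderh z hz, ContinuousLinearMap.norm_smulRight_apply, norm_one, one_mul]
    calc ‖deriv f z - (a : ℂ)‖ ≤ ‖deriv f z‖ + ‖(a : ℂ)‖ := norm_sub_le _ _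
      _ ≤ K + |a| := add_le_add (hbd z hz.1 hz.2) (by rw [Complex.norm_real]; exact le_rfl)
  have hcontcl : ContinuousOn h (closure U) := by
    rw [hclosU]
    exact hcont.sub ((continuous_const.mul continuous_id).continuousOn)
  have hdcc : DiffContOnCl ℂ h U :=
    ⟨fun z hz => (hdiffh z hz).differentiableWithinAt, hcontcl⟩
  -- growth bound for h on U
  set M : ℝ := ‖h (I / 2)‖ + 2 * K' with hM
  have hgrow : ∀ z ∈ U, ‖h z‖ ≤ M + K' * |z.re| := by
    intro z hz
    have hmv := hUconv.norm_image_sub_le_of_norm_fderiv_le (fun x hx => hdiffh x hx)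
      hKtot hmemU hz
    have habs : ‖z - I / 2‖ ≤ |z.re| + 2 := by
      have h1 : ‖z - I / 2‖ ≤ ‖z‖ + ‖I / 2‖ := norm_sub_le _ _
      have h2 : ‖I / 2‖ = 1 / 2 := by simp [norm_div, Complex.norm_I]
      have h3 : ‖z‖ ≤ |z.re| + |z.im| := Complex.norm_le_abs_re_add_abs_im z
      have h4 : |z.im| ≤ 1 := by
        rcases hmemUprop z hz with ⟨hz1, hz2⟩
        rw [abs_of_pos hz1]; exact hz2.le
      linarith
    have h5 : ‖h z‖ ≤ ‖h (I / 2)‖ + ‖h z - h (I / 2)‖ := by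
      have := norm_sub_norm_le (h z) (h (I / 2)); linarith [norm_sub_le (h z) (h (I/2))]
    have h6 : K' * ‖z - I / 2‖ ≤ K' * (|z.re| + 2) :=
      mul_le_mul_of_nonneg_left habs hK'
    have : ‖h z‖ ≤ ‖h (I / 2)‖ + K' * (|z.re| + 2) := by linarith
    rw [hM]; linarith [this]
  -- boundary values of Im h
  have himh : ∀ z : ℂ, (h z).im = (f z).im - a * z.im := by
    intro z; simp [hh, Complex.sub_im, Complex.mul_im]
  have hbdry0 : ∀ z : ℂ, z.im = 0 → (h z).im = c₀ := by
    intro z hz; rw [himh, h0 z hz, hz]; ring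
  have hbdry1 : ∀ z : ℂ, z.im = 1 → (h z).im = c₀ := by
    intro z hz; rw [himh, h1 z hz, hz, ha]; ring
  -- Phragmen-Lindelof in both directions
  have PL : ∀ σ : ℝ, |σ| = 1 → ∀ z : ℂ, 0 ≤ z.im → z.im ≤ 1 →
      Real.exp (-(σ * (h z).im)) ≤ Real.exp (-(σ * c₀)) := by
    intro σ hσ z hz0 hz1
    have hnorm : ∀ w : ℂ, ‖Complex.exp ((σ : ℂ) * I * h w)‖ = Real.exp (-(σ * (h w).im)) := by
      intro w
      rw [Complex.norm_exp]
      congr 1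
      simp [Complex.mul_re, Complex.mul_im]
    have hgd : DiffContOnCl ℂ (fun w => Complex.exp ((σ : ℂ) * I * h w)) U := by
      constructor
      · exact fun w hw => (((hdiffh w hw).differentiableWithinAt).const_mul _).cexp
      · rw [hclosU] at hcontcl ⊢
        exact (hcontcl.const_smul ((σ : ℂ) * I)).cexp
    have hπ : (1 : ℝ) < Real.pi / (1 - 0) := by
      rw [sub_zero, div_one]; linarith [Real.pi_gt_three]
    have hO : (fun w => Complex.exp ((σ : ℂ) * I * h w))
        =O[comap (_root_.abs ∘ Complex.re) atTop ⊓ 𝓟 U]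
        fun w => Real.exp (K' * Real.exp (1 * |w.re|)) := by
      refine Asymptotics.IsBigO.of_bound (Real.exp M) ?_
      refine Filter.eventually_inf_principal.2 (Filter.Eventually.of_forall fun w hw => ?_)
      rw [hnorm w]
      have h1 : -(σ * (h w).im) ≤ ‖h w‖ := by
        have : |σ * (h w).im| ≤ ‖h w‖ := by
          rw [abs_mul, hσ, one_mul]
          exact (Complex.abs_im_le_norm (h w)).trans le_rfl
        have := neg_abs_le (σ * (h w).im)
        linarith [abs_le.1 ‹|σ * (h w).im| ≤ ‖h w‖›]
      have h2 : ‖h w‖ ≤ M + K' * |w.re| := hgrow w hw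
      have h3 : K' * |w.re| ≤ K' * Real.exp (1 * |w.re|) := by
        apply mul_le_mul_of_nonneg_left _ hK'
        rw [one_mul]
        linarith [Real.add_one_le_exp |w.re|]
      have h4 : ‖Real.exp (K' * Real.exp (1 * |w.re|))‖
          = Real.exp (K' * Real.exp (1 * |w.re|)) := by
        rw [Real.norm_eq_abs, abs_of_pos (Real.exp_pos _)]
      rw [h4, ← Real.exp_add]
      exact Real.exp_le_exp.2 (by linarith)
    have hb0 : ∀ w : ℂ, w.im = 0 → ‖Complex.exp ((σ : ℂ) * I * h w)‖ ≤ Real.exp (-(σ * c₀)) := by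
      intro w hw; rw [hnorm w, hbdry0 w hw]
    have hb1 : ∀ w : ℂ, w.im = 1 → ‖Complex.exp ((σ : ℂ) * I * h w)‖ ≤ Real.exp (-(σ * c₀)) := by
      intro w hw; rw [hnorm w, hbdry1 w hw]
    have := PhragmenLindelof.horizontal_strip (a := 0) (b := 1)
      hgd ⟨1, hπ, K', hO⟩ hb0 hb1 hz0 hz1
    rwa [hnorm z] at this
  have him : ∀ z : ℂ, 0 ≤ z.im → z.im ≤ 1 → (h z).im = c₀ := by
    intro z hz0 hz1
    have hp := PL 1 (by norm_num) z hz0 hz1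
    have hm := PL (-1) (by norm_num) z hz0 hz1
    rw [Real.exp_le_exp] at hp hm
    simp only [one_mul, neg_mul, neg_neg] at hp hm
    linarith
  -- derivative of h vanishes on U
  have hd0 : ∀ z ∈ U, fderiv ℂ h z = 0 := by
    intro z hz
    set d : ℂ := deriv f z - a with hd
    have hz' : HasDerivAt h d z := hderh z hz
    set L : ℂ →L[ℝ] ℝ := Complex.imCLM.comp
      ((ContinuousLinearMap.smulRight (1 : ℂ →L[ℂ] ℂ) d).restrictScalars ℝ) with hL
    have hF : HasFDerivAt (fun w => (h w).im) L z :=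
      Complex.imCLM.hasFDerivAt.comp z (hz'.hasFDerivAt.restrictScalars ℝ)
    have heq : (fun w => (h w).im) =ᶠ[nhds z] fun _ => c₀ :=
      Filter.eventually_of_mem (hUopen.mem_nhds hz)
        (fun y hy => him y (hmemUprop y hy).1.le (hmemUprop y hy).2.le)
    have hF0 : HasFDerivAt (fun _ : ℂ => c₀) L z := hF.congr_of_eventuallyEq heq.symm
    have hL0 : L = 0 := hF0.unique (hasFDerivAt_const _ _)
    have e1 : L 1 = d.im := by
      show Complex.imCLM ((ContinuousLinearMap.smulRight (1 : ℂ →L[ℂ] ℂ) d) 1) = d.im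
      rw [ContinuousLinearMap.smulRight_apply]
      simp
    have e2 : L I = d.re := by
      show Complex.imCLM ((ContinuousLinearMap.smulRight (1 : ℂ →L[ℂ] ℂ) d) I) = d.re
      rw [ContinuousLinearMap.smulRight_apply]
      simp [Complex.mul_im]
    have hdzero : d = 0 := by
      apply Complex.ext
      · rw [← e2, hL0]; simp
      · rw [← e1, hL0]; simp
    rw [hfderh z hz, ← hd, hdzero]
    ext
    simp
  have hconst : ∀ z ∈ U, h z = h (I / 2) := by
    intro z hz
    have := hUconv.norm_image_sub_le_of_norm_fderiv_le (fun x hx => hdiffh x hx)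
      (C := 0) (fun x hx => by rw [hd0 x hx, norm_zero]) hmemU hz
    simp only [zero_mul] at this
    have h7 : h z - h (I / 2) = 0 := norm_le_zero_iff.1 this
    exact sub_eq_zero.1 h7
  -- extend constancy to the closed strip
  have htcl : t ∈ closure U := by rw [hclosU]; exact ⟨ht0, ht1⟩
  have hne : (nhdsWithin t U).NeBot := mem_closure_iff_nhdsWithin_neBot.1 htcl
  have l1 : Tendsto h (nhdsWithin t U) (nhds (h t)) :=
    (hcontcl t htcl).mono_left (nhdsWithin_mono t subset_closure)
  have l2 : Tendsto h (nhdsWithin t U) (nhds (h (I / 2))) := by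
    refine tendsto_const_nhds.congr' ?_
    filter_upwards [self_mem_nhdsWithin] with y hy
    exact (hconst y hy).symm
  have hht : h t = h (I / 2) := tendsto_nhds_unique l1 l2
  have : f t - (a : ℂ) * t = f (I / 2) - (a : ℂ) * (I / 2) := hht
  simp only [ha] at this ⊢
  push_cast at this ⊢
  linear_combination this

/-- **Liouville-type theorem on the closed strip `{0 ≤ Im t ≤ 1}`.**
If `w : ℂ → ℂⁿ` is continuous on the closed strip, holomorphic in its interior,
has derivative bounded by `C`, and maps each of the two boundary lines
`{Im t = 0}` and `{Im t = 1}` into a translate of `ℝⁿ` (i.e. `p₀ + ℝⁿ` and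
`p₁ + ℝⁿ`, recorded by fixing the coordinatewise imaginary parts), then `w`
is affine linear on the strip. -/
theorem holomorphic_strip_bounded_deriv_affine (n : ℕ)
    (w : ℂ → EuclideanSpace ℂ (Fin n)) (C : ℝ) (hC : 0 < C)
    (p₀ p₁ : EuclideanSpace ℂ (Fin n))
    (hcont : ContinuousOn w {t : ℂ | 0 ≤ t.im ∧ t.im ≤ 1})
    (hdiff : ∀ t : ℂ, 0 < t.im → t.im < 1 → DifferentiableAt ℂ w t)
    (hbd : ∀ t : ℂ, 0 < t.im → t.im < 1 → ‖deriv w t‖ ≤ C)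
    (hbd0 : ∀ t : ℂ, t.im = 0 → ∀ i : Fin n, (w t i - p₀ i).im = 0)
    (hbd1 : ∀ t : ℂ, t.im = 1 → ∀ i : Fin n, (w t i - p₁ i).im = 0) :
    ∃ a b : EuclideanSpace ℂ (Fin n), ∀ t : ℂ, 0 ≤ t.im → t.im ≤ 1 → w t = t • a + b := by
  refine ⟨WithLp.toLp 2 (fun i => (((p₁ i).im - (p₀ i).im : ℝ) : ℂ)),
    WithLp.toLp 2 (fun i => w (I / 2) i - (((p₁ i).im - (p₀ i).im : ℝ) : ℂ) * (I / 2)),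
    fun t ht0 ht1 => ?_⟩
  ext i
  have hder : ∀ s : ℂ, 0 < s.im → s.im < 1 →
      HasDerivAt (fun t => w t i) (deriv w s i) s := fun s hs1 hs2 => by
    exact (EuclideanSpace.proj i).hasFDerivAt.comp_hasDerivAt s (hdiff s hs1 hs2).hasDerivAt
  have key := strip_scalar (fun t => w t i) C hC.le ((p₀ i).im) ((p₁ i).im)
    ((EuclideanSpace.proj i).continuous.comp_continuousOn hcont)
    (fun s hs1 hs2 => (hder s hs1 hs2).differentiableAt)
    (fun s hs1 hs2 => by
      rw [(hder s hs1 hs2).deriv]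
      exact (euclidean_coord_norm_le _ i).trans (hbd s hs1 hs2))
    (fun s hs => by have := hbd0 s hs i; rw [Complex.sub_im] at this; linarith)
    (fun s hs => by have := hbd1 s hs i; rw [Complex.sub_im] at this; linarith)
    t ht0 ht1
  show w t i = t * (((p₁ i).im - (p₀ i).im : ℝ) : ℂ)
    + (w (I / 2) i - (((p₁ i).im - (p₀ i).im : ℝ) : ℂ) * (I / 2))
  exact key.trans (by ring)
end

section
/- Let u_k : I → ℂ^n be a sequence of differentiable functions on an open interval I around x₀ converging pointwise to a function u₀ which is differentiable at x₀, and let A ∈ ℂ^n with u₀'(x₀) ≠ A. Then there exist c₁ > 0, a subsequence u_{n_k}, and points x_k → x₀ with x_k ≠ x₀, such that ‖(u_{n_k}(x_k) - u_{n_k}(x₀))/(x_k - x₀) - A‖ ≥ c₁ for all k. -/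
open Filter

/-- **Lemma mg of the paper (vector-valued case).**
If differentiable functions `u_k : I → ℂⁿ` converge pointwise on an open set `I ∋ x₀`
to `u₀`, `u₀` is differentiable at `x₀`, and `u₀'(x₀) ≠ A`, then there exist `c₁ > 0`,
a subsequence and points `x_k → x₀`, `x_k ≠ x₀`, such that the difference quotients
`(u_{n_k}(x_k) - u_{n_k}(x₀))/(x_k - x₀)` stay at distance at least `c₁` from `A`. -/
theorem diff_quotient_subseq_far_of_deriv_ne (n : ℕ) (I : Set ℝ) (hI : IsOpen I)
    (x₀ : ℝ) (hx₀ : x₀ ∈ I) (u : ℕ → ℝ → EuclideanSpace ℂ (Fin n))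
    (u₀ : ℝ → EuclideanSpace ℂ (Fin n)) (d A : EuclideanSpace ℂ (Fin n))
    (hdiff : ∀ k, ∀ x ∈ I, DifferentiableAt ℝ (u k) x)
    (hconv : ∀ x ∈ I, Tendsto (fun k => u k x) atTop (nhds (u₀ x)))
    (hd : HasDerivAt u₀ d x₀) (hdA : d ≠ A) :
    ∃ c₁ > (0 : ℝ), ∃ φ : ℕ → ℕ, StrictMono φ ∧
      ∃ x : ℕ → ℝ, (∀ k, x k ∈ I ∧ x k ≠ x₀) ∧ Tendsto x atTop (nhds x₀) ∧
        ∀ k, c₁ ≤ ‖(x k - x₀)⁻¹ • (u (φ k) (x k) - u (φ k) x₀) - A‖ := by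
  set c₁ : ℝ := ‖d - A‖ / 4 with hc₁def
  have hc₁ : 0 < c₁ := by
    have : 0 < ‖d - A‖ := by
      simpa [sub_eq_zero] using hdA
    positivity
  -- slope of u₀ tends to d
  have hslope : Tendsto (slope u₀ x₀) (nhdsWithin x₀ {x₀}ᶜ) (nhds d) :=
    hasDerivAt_iff_tendsto_slope.mp hd
  -- choose points x̃ k
  have hchoose : ∀ k : ℕ, ∃ y : ℝ, y ∈ I ∧ y ≠ x₀ ∧ |y - x₀| < ((k : ℝ) + 1)⁻¹ ∧
      ‖slope u₀ x₀ y - d‖ < c₁ := by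
    intro k
    have h1 : I ∈ nhdsWithin x₀ {x₀}ᶜ :=
      mem_nhdsWithin_of_mem_nhds (hI.mem_nhds hx₀)
    have h2 : Metric.ball x₀ (((k : ℝ) + 1)⁻¹) ∈ nhdsWithin x₀ {x₀}ᶜ := by
      refine mem_nhdsWithin_of_mem_nhds (Metric.ball_mem_nhds _ (by positivity))
    have h3 : {y : ℝ | ‖slope u₀ x₀ y - d‖ < c₁} ∈ nhdsWithin x₀ {x₀}ᶜ := by
      have : Metric.ball d c₁ ∈ nhds d := Metric.ball_mem_nhds _ hc₁
      have := hslope this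
      exact Filter.mem_of_superset this (fun y hy => by
        simpa [Set.mem_preimage, Metric.mem_ball, dist_eq_norm] using hy)
    have h4 : ({x₀}ᶜ : Set ℝ) ∈ nhdsWithin x₀ {x₀}ᶜ := self_mem_nhdsWithin
    have hmem := Filter.inter_mem (Filter.inter_mem h1 h2) (Filter.inter_mem h3 h4)
    obtain ⟨y, ⟨⟨hyI, hyb⟩, hy3, hy4⟩⟩ := Filter.nonempty_of_mem hmem
    refine ⟨y, hyI, hy4, ?_, hy3⟩
    simpa [Real.dist_eq] using hyb
  choose x hxI hxne hxd hxs using hchoose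
  -- choose indices
  have hN : ∀ k : ℕ, ∃ N : ℕ, ∀ m ≥ N,
      ‖u m (x k) - u₀ (x k)‖ + ‖u m x₀ - u₀ x₀‖ < c₁ * |x k - x₀| := by
    intro k
    have hpos : 0 < c₁ * |x k - x₀| := by
      have : 0 < |x k - x₀| := abs_pos.mpr (sub_ne_zero.mpr (hxne k))
      positivity
    have h1 : Tendsto (fun m => ‖u m (x k) - u₀ (x k)‖) atTop (nhds 0) := by
      have := (hconv (x k) (hxI k)).sub_const (u₀ (x k))
      simpa using this.norm
    have h2 : Tendsto (fun m => ‖u m x₀ - u₀ x₀‖) atTop (nhds 0) := by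
      have := (hconv x₀ hx₀).sub_const (u₀ x₀)
      simpa using this.norm
    have h3 : Tendsto (fun m => ‖u m (x k) - u₀ (x k)‖ + ‖u m x₀ - u₀ x₀‖) atTop
        (nhds 0) := by simpa using h1.add h2
    have := (h3.eventually (eventually_lt_nhds hpos)).exists_forall_of_atTop
    simpa using this
  choose N hNs using hN
  -- recursive strictly monotone φ with φ k ≥ N k
  set φ : ℕ → ℕ := fun k => Nat.rec (N 0) (fun k ih => max (N (k + 1)) (ih + 1)) k with hφ
  have hφmono : StrictMono φ := by
    apply strictMono_nat_of_lt_succ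
    intro k
    exact lt_of_lt_of_le (Nat.lt_succ_self _) (le_max_right _ _)
  have hφN : ∀ k, N k ≤ φ k := by
    intro k
    cases k with
    | zero => exact le_refl _
    | succ k => exact le_max_left _ _
  refine ⟨c₁, hc₁, φ, hφmono, x, fun k => ⟨hxI k, hxne k⟩, ?_, ?_⟩
  · -- x k → x₀
    rw [tendsto_iff_dist_tendsto_zero]
    apply squeeze_zero (fun k => dist_nonneg) (fun k => ?_)
      tendsto_one_div_add_atTop_nhds_zero_nat
    rw [Real.dist_eq]
    have := (hxd k).le
    calc |x k - x₀| ≤ ((k : ℝ) + 1)⁻¹ := this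
      _ = 1 / ((k : ℝ) + 1) := (one_div _).symm
  · intro k
    have hne : x k - x₀ ≠ 0 := sub_ne_zero.mpr (hxne k)
    have habs : 0 < |x k - x₀| := abs_pos.mpr hne
    have hkey := hNs k (φ k) (hφN k)
    -- bound on slope difference
    have hsd : ‖(x k - x₀)⁻¹ • (u (φ k) (x k) - u (φ k) x₀) - slope u₀ x₀ (x k)‖ < c₁ := by
      have heq : (x k - x₀)⁻¹ • (u (φ k) (x k) - u (φ k) x₀) - slope u₀ x₀ (x k)
          = (x k - x₀)⁻¹ • ((u (φ k) (x k) - u₀ (x k)) - (u (φ k) x₀ - u₀ x₀)) := by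
        rw [slope_def_module]
        rw [← smul_sub]
        congr 1
        abel
      rw [heq, norm_smul]
      have h1 : ‖(u (φ k) (x k) - u₀ (x k)) - (u (φ k) x₀ - u₀ x₀)‖
          ≤ ‖u (φ k) (x k) - u₀ (x k)‖ + ‖u (φ k) x₀ - u₀ x₀‖ := norm_sub_le _ _
      have h2 : ‖u (φ k) (x k) - u₀ (x k)‖ + ‖u (φ k) x₀ - u₀ x₀‖ < c₁ * |x k - x₀| := hkey
      have h3 : ‖(x k - x₀)⁻¹‖ = |x k - x₀|⁻¹ := by
        rw [Real.norm_eq_abs, abs_inv]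
      rw [h3]
      calc |x k - x₀|⁻¹ * ‖(u (φ k) (x k) - u₀ (x k)) - (u (φ k) x₀ - u₀ x₀)‖
          < |x k - x₀|⁻¹ * (c₁ * |x k - x₀|) := by
            apply mul_lt_mul_of_pos_left (lt_of_le_of_lt h1 h2) (inv_pos.mpr habs)
        _ = c₁ := by field_simp
    -- slope u₀ close to d, d far from A
    have h4 : ‖slope u₀ x₀ (x k) - d‖ < c₁ := hxs k
    have h5 : ‖d - A‖ = 4 * c₁ := by rw [hc₁def]; ring
    -- triangle
    have t1 := norm_sub_le_norm_sub_add_norm_sub d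
        ((x k - x₀)⁻¹ • (u (φ k) (x k) - u (φ k) x₀)) A
    have t2 := norm_sub_le_norm_sub_add_norm_sub d (slope u₀ x₀ (x k))
        ((x k - x₀)⁻¹ • (u (φ k) (x k) - u (φ k) x₀))
    have e1 : ‖d - slope u₀ x₀ (x k)‖ = ‖slope u₀ x₀ (x k) - d‖ := norm_sub_rev _ _
    have e2 : ‖slope u₀ x₀ (x k) - (x k - x₀)⁻¹ • (u (φ k) (x k) - u (φ k) x₀)‖
        = ‖(x k - x₀)⁻¹ • (u (φ k) (x k) - u (φ k) x₀) - slope u₀ x₀ (x k)‖ :=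
      norm_sub_rev _ _
    linarith
end
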